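/- For every natural number n ≥ 1 and every simple graph G on Fin n, there exists a first-order formula ε in the language of graphs with three free variables such that for every endpoint p of pathGraph n there is a bijection f : Fin n → Fin n with the property that for all u, v : Fin n, pathGraph n satisfies ε(p, f u, f v) if and only if u and v are adjacent in G. -/

import Mathlib

open FirstOrder Language SimpleGraph

/-- A vertex of `pathGraph n` is an endpoint if it has degree at most one, i.e. its
neighbor set is a subsingleton. For `n ≥ 2` these are exactly the vertices `0` and `n-1`. -/
def IsEndpoint (n : ℕ) (p : Fin n) : Prop :=
  ((pathGraph n).neighborSet p).Subsingleton

/-- "within distance k" formula on two free variables. -/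
noncomputable def walkF : ℕ → Language.graph.Formula (Fin 2)
  | 0 => Term.equal (Term.var 0) (Term.var 1)
  | k + 1 =>
    Formula.iExs Unit (Formula.relabel (![Sum.inl 0, Sum.inl 1, Sum.inr ()] : Fin 3 → (Fin 2) ⊕ Unit)
      ((Term.equal (Term.var 0) (Term.var 2) ⊔ adj.formula₂ (Term.var 0) (Term.var 2)) ⊓
        (walkF k).relabel ![2, 1]))

lemma relmap_adj {n : ℕ} (a b : Fin n) :
    letI := (pathGraph n).structure
    Structure.RelMap adj ![a, b] ↔ (pathGraph n).Adj a b := Iff.rfl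

lemma realize_walkF {n : ℕ} (k : ℕ) (a b : Fin n) :
    @Formula.Realize _ _ (pathGraph n).structure _ (walkF k) ![a, b] ↔
      ((a : ℤ) - b).natAbs ≤ k := by
  letI := (pathGraph n).structure
  induction k generalizing a with
  | zero =>
      simp only [walkF, Formula.realize_equal, Term.realize_var, Nat.le_zero,
        Int.natAbs_eq_zero, sub_eq_zero, Matrix.cons_val_zero, Matrix.cons_val_one,
        Matrix.head_cons]
      exact ⟨fun h => by rw [h], fun h => Fin.ext (by exact_mod_cast h)⟩
  | succ k ih =>
      have key : (walkF (k+1)).Realize ![a, b] ↔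
          ∃ c : Fin n, (a = c ∨ (pathGraph n).Adj a c) ∧ (walkF k).Realize ![c, b] := by
        rw [show walkF (k+1) = Formula.iExs Unit (Formula.relabel
            (![Sum.inl 0, Sum.inl 1, Sum.inr ()] : Fin 3 → (Fin 2) ⊕ Unit)
            ((Term.equal (Term.var 0) (Term.var 2) ⊔ adj.formula₂ (Term.var 0) (Term.var 2)) ⊓
              (walkF k).relabel ![2, 1])) from rfl]
        rw [Formula.realize_iExs]
        simp only [Formula.realize_relabel]
        constructor
        · rintro ⟨i, hi⟩
          refine ⟨i (), ?_, ?_⟩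
          · have := (Formula.realize_inf.1 hi).1
            rw [Formula.realize_sup, Formula.realize_equal, Formula.realize_rel₂] at this
            simpa [relmap_adj] using this
          · have := (Formula.realize_inf.1 hi).2
            rw [Formula.realize_relabel] at this
            convert this using 2
            funext j
            fin_cases j <;> rfl
        · rintro ⟨c, hc, hw⟩
          refine ⟨fun _ => c, ?_⟩
          rw [Formula.realize_inf, Formula.realize_sup, Formula.realize_equal,
            Formula.realize_rel₂, Formula.realize_relabel]
          constructor
          · simpa [relmap_adj] using hc
          · convert hw using 2
            funext j
            fin_cases j <;> rfl
      rw [key]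
      constructor
      · rintro ⟨c, hc, hw⟩
        replace hw := (ih c).1 hw
        have : ((a : ℤ) - c).natAbs ≤ 1 := by
          rcases hc with rfl | hadj
          · simp
          · rw [pathGraph_adj] at hadj
            omega
        omega
      · intro h
        by_cases hab : ((a : ℤ) - b).natAbs ≤ k
        · exact ⟨a, Or.inl rfl, (ih a).2 hab⟩
        · -- step one toward b
          rcases lt_or_ge a.val b.val with hlt | hle
          · refine ⟨⟨a.val + 1, lt_of_le_of_lt hlt b.isLt⟩, Or.inr ?_, (ih _).2 ?_⟩
            · rw [pathGraph_adj]; left; rfl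
            · simp only [Fin.val_mk] at *; omega
          · have ha : 0 < a.val := by omega
            refine ⟨⟨a.val - 1, by omega⟩, Or.inr ?_, (ih _).2 ?_⟩
            · rw [pathGraph_adj]; right; simp; omega
            · simp only [Fin.val_mk] at *; omega

/-- "exactly distance k" formula. -/
noncomputable def exactF : ℕ → Language.graph.Formula (Fin 2)
  | 0 => walkF 0
  | k + 1 => walkF (k + 1) ⊓ (walkF k).not

lemma realize_exactF {n : ℕ} (k : ℕ) (a b : Fin n) :
    @Formula.Realize _ _ (pathGraph n).structure _ (exactF k) ![a, b] ↔
      ((a : ℤ) - b).natAbs = k := by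
  letI := (pathGraph n).structure
  cases k with
  | zero => rw [show exactF 0 = walkF 0 from rfl, realize_walkF]; omega
  | succ k =>
      rw [show exactF (k+1) = walkF (k+1) ⊓ (walkF k).not from rfl, Formula.realize_inf,
        Formula.realize_not, realize_walkF, realize_walkF]
      omega

lemma endpoint_val {n : ℕ} (p : Fin n) (hp : IsEndpoint n p) :
    p.val = 0 ∨ p.val = n - 1 := by
  by_contra h
  push_neg at h
  have h1 : 0 < p.val := Nat.pos_of_ne_zero h.1
  have h2 : p.val < n - 1 := by
    have := p.isLt
    omega
  have hq1 : (⟨p.val - 1, by omega⟩ : Fin n) ∈ (pathGraph n).neighborSet p := by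
    rw [SimpleGraph.mem_neighborSet, pathGraph_adj]
    right; simp; omega
  have hq2 : (⟨p.val + 1, by omega⟩ : Fin n) ∈ (pathGraph n).neighborSet p := by
    rw [SimpleGraph.mem_neighborSet, pathGraph_adj]
    left; rfl
  have := hp hq1 hq2
  rw [Fin.mk_eq_mk] at this
  omega

theorem exists_formula_encoding_graph (n : ℕ) (hn : 1 ≤ n) (G : SimpleGraph (Fin n)) :
    ∃ ε : Language.graph.Formula (Fin 3),
      ∀ p : Fin n, IsEndpoint n p →
        ∃ f : Fin n → Fin n, Function.Bijective f ∧
          ∀ u v : Fin n,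
            (letI := (pathGraph n).structure
             ε.Realize ![p, f u, f v]) ↔ G.Adj u v := by
  classical
  letI := (pathGraph n).structure
  refine ⟨BoundedFormula.iSup (fun e : ↥(Finset.univ.filter (fun e : Fin n × Fin n => G.Adj e.1 e.2)) =>
    ((exactF e.1.1.val).relabel ![0, 1]) ⊓ ((exactF e.1.2.val).relabel ![0, 2])), ?_⟩
  intro p hp
  set f : Fin n → Fin n := fun u => if p.val = 0 then u else ⟨n - 1 - u.val, by omega⟩ with hf
  have hval : p.val = 0 ∨ p.val = n - 1 := endpoint_val p hp
  have hfval : ∀ u : Fin n, (f u).val = if p.val = 0 then u.val else n - 1 - u.val := by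
    intro u
    by_cases h : p.val = 0 <;> simp [hf, h]
  have hinv : Function.Involutive f := by
    intro u
    apply Fin.ext
    rw [hfval, hfval]
    have := u.isLt
    by_cases h : p.val = 0 <;> simp [h] <;> omega
  have hdist : ∀ u : Fin n, ((p : ℤ) - (f u : ℤ)).natAbs = u.val := by
    intro u
    rw [hfval]
    have := u.isLt
    by_cases h : p.val = 0 <;> simp [h] <;> omega
  refine ⟨f, hinv.bijective, ?_⟩
  intro u v
  show @Formula.Realize _ _ (pathGraph n).structure _ _ ![p, f u, f v] ↔ G.Adj u v
  rw [show @Formula.Realize _ _ (pathGraph n).structure _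
      (BoundedFormula.iSup (fun e : ↥(Finset.univ.filter (fun e : Fin n × Fin n => G.Adj e.1 e.2)) =>
        ((exactF e.1.1.val).relabel ![0, 1]) ⊓ ((exactF e.1.2.val).relabel ![0, 2])))
      ![p, f u, f v]
    = @BoundedFormula.Realize _ _ (pathGraph n).structure _ _
        (BoundedFormula.iSup (fun e : ↥(Finset.univ.filter (fun e : Fin n × Fin n => G.Adj e.1 e.2)) =>
          ((exactF e.1.1.val).relabel ![0, 1]) ⊓ ((exactF e.1.2.val).relabel ![0, 2])))
        ![p, f u, f v] default from rfl]
  rw [BoundedFormula.realize_iSup]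
  constructor
  · rintro ⟨⟨e, he⟩, hre⟩
    rw [Finset.mem_filter] at he
    have h1 := (BoundedFormula.realize_inf.1 hre).1
    have h2 := (BoundedFormula.realize_inf.1 hre).2
    rw [show (@BoundedFormula.Realize _ _ (pathGraph n).structure _ _
        ((exactF e.1.val).relabel ![0, 1]) ![p, f u, f v] default : Prop)
      = (@Formula.Realize _ _ (pathGraph n).structure _
          ((exactF e.1.val).relabel ![0, 1]) ![p, f u, f v] : Prop) from rfl,
      Formula.realize_relabel] at h1
    rw [show (@BoundedFormula.Realize _ _ (pathGraph n).structure _ _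
        ((exactF e.2.val).relabel ![0, 2]) ![p, f u, f v] default : Prop)
      = (@Formula.Realize _ _ (pathGraph n).structure _
          ((exactF e.2.val).relabel ![0, 2]) ![p, f u, f v] : Prop) from rfl,
      Formula.realize_relabel] at h2
    have e1 : (![p, f u, f v] ∘ (![0, 1] : Fin 2 → Fin 3)) = ![p, f u] := by
      funext j; fin_cases j <;> rfl
    have e2 : (![p, f u, f v] ∘ (![0, 2] : Fin 2 → Fin 3)) = ![p, f v] := by
      funext j; fin_cases j <;> rfl
    rw [e1, realize_exactF, hdist] at h1
    rw [e2, realize_exactF, hdist] at h2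
    have hu : e.1 = u := Fin.ext h1.symm
    have hv : e.2 = v := Fin.ext h2.symm
    rw [← hu, ← hv]
    exact he.2
  · intro hadj
    refine ⟨⟨(u, v), Finset.mem_filter.2 ⟨Finset.mem_univ _, hadj⟩⟩, ?_⟩
    rw [BoundedFormula.realize_inf]
    constructor
    · rw [show (@BoundedFormula.Realize _ _ (pathGraph n).structure _ _
          ((exactF u.val).relabel ![0, 1]) ![p, f u, f v] default : Prop)
        = (@Formula.Realize _ _ (pathGraph n).structure _
            ((exactF u.val).relabel ![0, 1]) ![p, f u, f v] : Prop) from rfl,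
        Formula.realize_relabel,
        show (![p, f u, f v] ∘ (![0, 1] : Fin 2 → Fin 3)) = ![p, f u] from by
          funext j; fin_cases j <;> rfl,
        realize_exactF, hdist]
    · rw [show (@BoundedFormula.Realize _ _ (pathGraph n).structure _ _
          ((exactF v.val).relabel ![0, 2]) ![p, f u, f v] default : Prop)
        = (@Formula.Realize _ _ (pathGraph n).structure _
            ((exactF v.val).relabel ![0, 2]) ![p, f u, f v] : Prop) from rfl,
        Formula.realize_relabel,
        show (![p, f u, f v] ∘ (![0, 2] : Fin 2 → Fin 3)) = ![p, f v] from by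
          funext j; fin_cases j <;> rfl,
        realize_exactF, hdist]
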